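/- Let K ≥ 0 and let A(t) = Σ_{ν≥1} A_ν t^ν be a real formal power series with zero constant term whose coefficients satisfy 0 ≤ A_ν ≤ K·M_ν for all ν ≥ 1. Then for every ν ≥ 1 the degree-ν coefficient of exp(A(t)) − 1 is at most λ^{-1}·(e^{Kλ} − 1)·M_ν. -/

import Mathlib

/-- The exponential `exp(A(t)) = Σ_{l≥0} A(t)^l / l!` of a formal power series, defined
coefficientwise (the sum of coefficients converges trivially when `A` has zero constant
term, since then only the terms with `l ≤ ν` contribute in degree `ν`). -/
noncomputable def pexp (A : PowerSeries ℝ) : PowerSeries ℝ :=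
  PowerSeries.mk fun ν => ∑' (l : ℕ), (1 / (Nat.factorial l : ℝ)) * PowerSeries.coeff ν (A ^ l)

/-- Partial sums of `Σ 1/k²` (with the `k = 0` term set to zero) are bounded by 2. -/
lemma stmt4_sum_inv_sq (n : ℕ) :
    ∑ k ∈ Finset.range (n + 1), (if k = 0 then (0 : ℝ) else 1 / (k : ℝ) ^ 2) ≤ 2 := by
  have key : ∀ m : ℕ, 1 ≤ m →
      ∑ k ∈ Finset.range (m + 1), (if k = 0 then (0 : ℝ) else 1 / (k : ℝ) ^ 2)
        ≤ 2 - 1 / (m : ℝ) := by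
    intro m hm
    induction m, hm using Nat.le_induction with
    | base =>
      norm_num [Finset.sum_range_succ]
    | succ n hn ih =>
      rw [Finset.sum_range_succ]
      have hn0 : (0 : ℝ) < n := by exact_mod_cast hn
      have h1 : (if n + 1 = 0 then (0 : ℝ) else 1 / ((n + 1 : ℕ) : ℝ) ^ 2)
          = 1 / ((n : ℝ) + 1) ^ 2 := by
        simp [Nat.succ_ne_zero]
      rw [h1]
      have h2 : 1 / ((n : ℝ) + 1) ^ 2 ≤ 1 / (n : ℝ) - 1 / ((n : ℝ) + 1) := by
        rw [div_sub_div _ _ (ne_of_gt hn0) (by positivity)]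
        rw [div_le_div_iff₀ (by positivity) (by positivity)]
        ring_nf
        nlinarith
      push_cast
      linarith
  rcases Nat.eq_zero_or_pos n with h | h
  · subst h; norm_num
  · have := key n h
    have : 0 < (n : ℝ) := by exact_mod_cast h
    have h1 : 0 < 1 / (n : ℝ) := by positivity
    linarith [key n h]

/-- The key elementary inequality: for `x, y ≥ 1`,
`1/(x²y²) ≤ (4/(x+y)²)·(1/x² + 1/y²)`. -/
lemma stmt4_key_ineq (x y : ℝ) (hx : 1 ≤ x) (hy : 1 ≤ y) :
    1 / (x ^ 2 * y ^ 2) ≤ 4 / (x + y) ^ 2 * (1 / x ^ 2 + 1 / y ^ 2) := by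
  have hx0 : 0 < x := lt_of_lt_of_le one_pos hx
  have hy0 : 0 < y := lt_of_lt_of_le one_pos hy
  have hxy : 0 < x + y := by linarith
  rw [div_add_div _ _ (by positivity) (by positivity), div_mul_div_comm,
    div_le_div_iff₀ (by positivity) (by positivity)]
  nlinarith [sq_nonneg (x - y), sq_nonneg (x * y), mul_pos hx0 hy0]

theorem stmt_4 (c lam K : ℝ) (hc : 0 < c) (hlam : lam = 1 / c) (hK : 0 ≤ K)
    (M : ℕ → ℝ) (hM : ∀ ν : ℕ, M ν = 1 / (16 * c) * c ^ ν / (ν : ℝ) ^ 2)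
    (A : PowerSeries ℝ) (hA0 : PowerSeries.constantCoeff A = 0)
    (hAnonneg : ∀ ν : ℕ, 1 ≤ ν → 0 ≤ PowerSeries.coeff ν A)
    (hAle : ∀ ν : ℕ, 1 ≤ ν → PowerSeries.coeff ν A ≤ K * M ν) :
    ∀ ν : ℕ, 1 ≤ ν →
      PowerSeries.coeff ν (pexp A - 1) ≤ lam⁻¹ * (Real.exp (K * lam) - 1) * M ν := by
  have hlam0 : 0 < lam := by rw [hlam]; positivity
  -- truncated majorant
  set m : ℕ → ℝ := fun n => if n = 0 then 0 else M n with hm_def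
  have hMnn : ∀ n : ℕ, 1 ≤ n → 0 ≤ M n := by
    intro n hn
    rw [hM]
    have : (0:ℝ) < (n : ℝ) := by exact_mod_cast hn
    positivity
  have hmnn : ∀ n : ℕ, 0 ≤ m n := by
    intro n
    rcases Nat.eq_zero_or_pos n with h | h
    · simp [hm_def, h]
    · simpa [hm_def, Nat.pos_iff_ne_zero.mp h] using hMnn n h
  -- coefficients of A are nonneg and bounded by K * m
  have hAnn : ∀ n : ℕ, 0 ≤ PowerSeries.coeff n A := by
    intro n
    rcases Nat.eq_zero_or_pos n with h | h
    · subst h; rw [PowerSeries.coeff_zero_eq_constantCoeff_apply, hA0]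
    · exact hAnonneg n h
  have hAm : ∀ n : ℕ, PowerSeries.coeff n A ≤ K * m n := by
    intro n
    rcases Nat.eq_zero_or_pos n with h | h
    · subst h
      rw [PowerSeries.coeff_zero_eq_constantCoeff_apply, hA0]
      simp [hm_def]
    · simpa [hm_def, Nat.pos_iff_ne_zero.mp h] using hAle n h
  -- nonnegativity of coefficients of powers of A
  have hpownn : ∀ l n : ℕ, 0 ≤ PowerSeries.coeff n (A ^ l) := by
    intro l
    induction l with
    | zero =>
      intro n
      rw [pow_zero, PowerSeries.coeff_one]
      split <;> norm_num
    | succ l ih =>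
      intro n
      rw [pow_succ, PowerSeries.coeff_mul]
      exact Finset.sum_nonneg fun p _ => mul_nonneg (ih p.1) (hAnn p.2)
  -- convolution bound : Σ m k * m (n-k) ≤ lam * m n
  have hconv : ∀ n : ℕ, ∑ k ∈ Finset.range (n + 1), m k * m (n - k) ≤ lam * m n := by
    intro n
    rcases Nat.eq_zero_or_pos n with h | h
    · subst h; simp [hm_def]
    have hn0 : n ≠ 0 := Nat.pos_iff_ne_zero.mp h
    have hnR : (0:ℝ) < (n : ℝ) := by exact_mod_cast h
    set C : ℝ := 4 / (n : ℝ) ^ 2 * (1 / (16 * c)) ^ 2 * c ^ n with hC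
    have hC0 : 0 ≤ C := by positivity
    have step : ∀ k ∈ Finset.range (n + 1),
        m k * m (n - k) ≤ C * ((if k = 0 ∨ k = n then 0 else 1 / (k : ℝ) ^ 2)
          + (if k = 0 ∨ k = n then 0 else 1 / ((n - k : ℕ) : ℝ) ^ 2)) := by
      intro k hk
      rw [Finset.mem_range] at hk
      by_cases hcase : k = 0 ∨ k = n
      · rcases hcase with h0 | h0 <;>
          simp [hm_def, h0, if_pos, hC0]
      push_neg at hcase
      obtain ⟨hk0, hkn⟩ := hcase
      have hk1 : 1 ≤ k := Nat.pos_iff_ne_zero.mpr hk0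
      have hklt : k < n := lt_of_le_of_ne (Nat.lt_succ_iff.mp hk) hkn
      have hnk1 : 1 ≤ n - k := by omega
      have hkR : (1:ℝ) ≤ (k:ℝ) := by exact_mod_cast hk1
      have hnkR : (1:ℝ) ≤ ((n - k : ℕ) : ℝ) := by exact_mod_cast hnk1
      have hsum : (k : ℝ) + ((n - k : ℕ) : ℝ) = (n : ℝ) := by
        have hnat : k + (n - k) = n := by omega
        exact_mod_cast hnat
      have key := stmt4_key_ineq (k : ℝ) ((n - k : ℕ) : ℝ) hkR hnkR
      rw [hsum] at key
      have hmk : m k = 1 / (16 * c) * c ^ k / (k : ℝ) ^ 2 := by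
        simp [hm_def, hk0, hM k]
      have hmnk : m (n - k) = 1 / (16 * c) * c ^ (n - k) / ((n - k : ℕ) : ℝ) ^ 2 := by
        simp [hm_def, Nat.pos_iff_ne_zero.mp (lt_of_lt_of_le Nat.zero_lt_one hnk1), hM (n - k)]
      have hcpow : c ^ k * c ^ (n - k) = c ^ n := by
        rw [← pow_add, Nat.add_sub_cancel' (le_of_lt hklt)]
      rw [if_neg (by tauto), if_neg (by tauto), hmk, hmnk]
      have lhs_eq : 1 / (16 * c) * c ^ k / (k : ℝ) ^ 2 *
          (1 / (16 * c) * c ^ (n - k) / ((n - k : ℕ) : ℝ) ^ 2)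
          = (1 / (16 * c)) ^ 2 * c ^ n * (1 / ((k : ℝ) ^ 2 * ((n - k : ℕ) : ℝ) ^ 2)) := by
        field_simp
        rw [← hcpow]
      rw [lhs_eq, hC]
      have hfac : (0:ℝ) ≤ (1 / (16 * c)) ^ 2 * c ^ n := by positivity
      calc (1 / (16 * c)) ^ 2 * c ^ n * (1 / ((k : ℝ) ^ 2 * ((n - k : ℕ) : ℝ) ^ 2))
          ≤ (1 / (16 * c)) ^ 2 * c ^ n *
            (4 / (n:ℝ) ^ 2 * (1 / (k : ℝ) ^ 2 + 1 / ((n - k : ℕ) : ℝ) ^ 2)) :=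
            mul_le_mul_of_nonneg_left key hfac
        _ = 4 / (n : ℝ) ^ 2 * (1 / (16 * c)) ^ 2 * c ^ n *
            (1 / (k : ℝ) ^ 2 + 1 / ((n - k : ℕ) : ℝ) ^ 2) := by ring
    calc ∑ k ∈ Finset.range (n + 1), m k * m (n - k)
        ≤ ∑ k ∈ Finset.range (n + 1),
          C * ((if k = 0 ∨ k = n then 0 else 1 / (k : ℝ) ^ 2)
            + (if k = 0 ∨ k = n then 0 else 1 / ((n - k : ℕ) : ℝ) ^ 2)) :=
          Finset.sum_le_sum step
      _ = C * ((∑ k ∈ Finset.range (n + 1), (if k = 0 ∨ k = n then 0 else 1 / (k : ℝ) ^ 2))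
          + ∑ k ∈ Finset.range (n + 1),
            (if k = 0 ∨ k = n then 0 else 1 / ((n - k : ℕ) : ℝ) ^ 2)) := by
          rw [← Finset.sum_add_distrib, Finset.mul_sum]
      _ ≤ lam * m n := by
          have hS1 : ∀ s : Finset ℕ,
              (∑ k ∈ s, (if k = 0 ∨ k = n then (0:ℝ) else 1 / (k : ℝ) ^ 2))
                ≤ ∑ k ∈ s, (if k = 0 then (0:ℝ) else 1 / (k : ℝ) ^ 2) := by
            intro s
            refine Finset.sum_le_sum fun k _ => ?_
            by_cases h0 : k = 0
            · simp [h0]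
            · by_cases h1 : k = n
              · simp only [h0, h1, or_true, if_pos, if_neg h0]
                positivity
              · rw [if_neg (by tauto), if_neg h0]
          have hS2 : (∑ k ∈ Finset.range (n + 1),
              (if k = 0 ∨ k = n then (0:ℝ) else 1 / ((n - k : ℕ) : ℝ) ^ 2))
              = ∑ k ∈ Finset.range (n + 1),
                (if k = 0 ∨ k = n then (0:ℝ) else 1 / (k : ℝ) ^ 2) := by
            have hrefl := Finset.sum_range_reflect
              (fun j => if j = 0 ∨ j = n then (0:ℝ) else 1 / (j : ℝ) ^ 2) (n + 1)
            rw [← hrefl]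
            refine Finset.sum_congr rfl fun k hk => ?_
            rw [Finset.mem_range] at hk
            have hnk : n + 1 - 1 - k = n - k := by omega
            rw [hnk]
            by_cases h0 : k = 0
            · subst h0; simp
            · by_cases h1 : k = n
              · subst h1; simp
              · have : n - k ≠ 0 := by omega
                have : n - k ≠ n := by omega
                rw [if_neg (by tauto), if_neg (by omega)]
          rw [hS2]
          have hb : (∑ k ∈ Finset.range (n + 1),
              (if k = 0 ∨ k = n then (0:ℝ) else 1 / (k : ℝ) ^ 2)) ≤ 2 :=
            le_trans (hS1 _) (by simpa using stmt4_sum_inv_sq n)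
          have hbn : (0:ℝ) ≤ ∑ k ∈ Finset.range (n + 1),
              (if k = 0 ∨ k = n then (0:ℝ) else 1 / (k : ℝ) ^ 2) := by
            refine Finset.sum_nonneg fun k _ => ?_
            split <;> positivity
          have : C * (2 * 2) ≤ lam * m n := by
            have hmn : m n = 1 / (16 * c) * c ^ n / (n : ℝ) ^ 2 := by
              simp [hm_def, hn0, hM n]
            rw [hC, hmn, hlam]
            refine le_of_eq ?_
            field_simp
            ring
          calc C * (_ + _) ≤ C * (2 + 2) := by
                refine mul_le_mul_of_nonneg_left ?_ hC0
                linarith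
            _ ≤ lam * m n := by linarith [this]
  -- main induction: coeff n (A^l) ≤ K^l * lam^(l-1) * m n
  have hmain : ∀ l : ℕ, 1 ≤ l → ∀ n : ℕ,
      PowerSeries.coeff n (A ^ l) ≤ K ^ l * lam ^ (l - 1) * m n := by
    intro l hl
    induction l, hl using Nat.le_induction with
    | base =>
      intro n
      simpa using hAm n
    | succ l hl ih =>
      intro n
      rw [pow_succ, PowerSeries.coeff_mul, Finset.Nat.sum_antidiagonal_eq_sum_range_succ_mk]
      have hterm : ∀ k ∈ Finset.range (n + 1),
          PowerSeries.coeff k (A ^ l) * PowerSeries.coeff (n - k) A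
            ≤ (K ^ l * lam ^ (l - 1)) * K * (m k * m (n - k)) := by
        intro k _
        have h1 := ih k
        have h2 := hAm (n - k)
        have := mul_le_mul h1 h2 (hAnn (n - k))
          (mul_nonneg (by positivity) (hmnn k))
        calc PowerSeries.coeff k (A ^ l) * PowerSeries.coeff (n - k) A
            ≤ (K ^ l * lam ^ (l - 1) * m k) * (K * m (n - k)) := this
          _ = (K ^ l * lam ^ (l - 1)) * K * (m k * m (n - k)) := by ring
      calc ∑ k ∈ Finset.range (n + 1),
            PowerSeries.coeff k (A ^ l) * PowerSeries.coeff (n - k) A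
          ≤ ∑ k ∈ Finset.range (n + 1),
            (K ^ l * lam ^ (l - 1)) * K * (m k * m (n - k)) := Finset.sum_le_sum hterm
        _ = (K ^ l * lam ^ (l - 1)) * K *
            ∑ k ∈ Finset.range (n + 1), m k * m (n - k) := by rw [Finset.mul_sum]
        _ ≤ (K ^ l * lam ^ (l - 1)) * K * (lam * m n) := by
            refine mul_le_mul_of_nonneg_left (hconv n) (by positivity)
        _ = K ^ (l + 1) * (lam ^ (l - 1) * lam) * m n := by ring
        _ = K ^ (l + 1) * lam ^ (l + 1 - 1) * m n := by
            rw [← pow_succ, Nat.sub_add_cancel hl, Nat.add_sub_cancel]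
  -- vanishing of high powers
  have hvan : ∀ n l : ℕ, n < l → PowerSeries.coeff n (A ^ l) = 0 := by
    intro n l hnl
    have hXd : (PowerSeries.X : PowerSeries ℝ) ∣ A := PowerSeries.X_dvd_iff.mpr hA0
    have : (PowerSeries.X : PowerSeries ℝ) ^ l ∣ A ^ l := pow_dvd_pow_of_dvd hXd l
    exact (PowerSeries.X_pow_dvd_iff.mp this) n hnl
  -- assemble
  intro ν hν
  have hν0 : ν ≠ 0 := Nat.pos_iff_ne_zero.mp hν
  have hcoeff1 : PowerSeries.coeff ν (1 : PowerSeries ℝ) = 0 := by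
    rw [PowerSeries.coeff_one, if_neg hν0]
  rw [map_sub, hcoeff1, sub_zero]
  have hpexp : PowerSeries.coeff ν (pexp A)
      = ∑ l ∈ Finset.range (ν + 1),
        (1 / (Nat.factorial l : ℝ)) * PowerSeries.coeff ν (A ^ l) := by
    rw [pexp, PowerSeries.coeff_mk]
    refine tsum_eq_sum fun l hl => ?_
    rw [Finset.mem_range, not_lt] at hl
    rw [hvan ν l (by omega), mul_zero]
  rw [hpexp, Finset.sum_range_succ']
  have hf0 : (1 / ((Nat.factorial 0 : ℕ) : ℝ)) * PowerSeries.coeff ν (A ^ 0) = 0 := by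
    rw [pow_zero, hcoeff1, mul_zero]
  rw [hf0, add_zero]
  have hmν : m ν = M ν := by simp [hm_def, hν0]
  have hterm : ∀ l ∈ Finset.range ν,
      (1 / ((Nat.factorial (l + 1) : ℕ) : ℝ)) * PowerSeries.coeff ν (A ^ (l + 1))
        ≤ (K * lam) ^ (l + 1) / ((Nat.factorial (l + 1) : ℕ) : ℝ) * (lam⁻¹ * M ν) := by
    intro l _
    have hfact : (0:ℝ) < ((Nat.factorial (l + 1) : ℕ) : ℝ) := by
      exact_mod_cast Nat.factorial_pos (l + 1)
    have h1 := hmain (l + 1) (by omega) ν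
    rw [hmν] at h1
    have h2 : (1 / ((Nat.factorial (l + 1) : ℕ) : ℝ)) * PowerSeries.coeff ν (A ^ (l + 1))
        ≤ (1 / ((Nat.factorial (l + 1) : ℕ) : ℝ)) * (K ^ (l + 1) * lam ^ (l + 1 - 1) * M ν) :=
      mul_le_mul_of_nonneg_left h1 (by positivity)
    refine le_trans h2 (le_of_eq ?_)
    have : l + 1 - 1 = l := rfl
    rw [this]
    rw [mul_pow]
    have hlamne : lam ≠ 0 := ne_of_gt hlam0
    field_simp
    ring
  have hsum := Finset.sum_le_sum hterm
  refine le_trans hsum ?_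
  rw [← Finset.sum_mul]
  have hexp : ∑ l ∈ Finset.range ν, (K * lam) ^ (l + 1) / ((Nat.factorial (l + 1) : ℕ) : ℝ)
      ≤ Real.exp (K * lam) - 1 := by
    have hx : (0:ℝ) ≤ K * lam := mul_nonneg hK (le_of_lt hlam0)
    have h := Real.sum_le_exp_of_nonneg hx (ν + 1)
    rw [Finset.sum_range_succ'] at h
    have h0 : (K * lam) ^ 0 / ((Nat.factorial 0 : ℕ) : ℝ) = 1 := by norm_num
    rw [h0] at h
    linarith
  have hMν : 0 ≤ M ν := hMnn ν hν
  calc (∑ l ∈ Finset.range ν, (K * lam) ^ (l + 1) / ((Nat.factorial (l + 1) : ℕ) : ℝ))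
        * (lam⁻¹ * M ν)
      ≤ (Real.exp (K * lam) - 1) * (lam⁻¹ * M ν) := by
        refine mul_le_mul_of_nonneg_right hexp (by positivity)
    _ = lam⁻¹ * (Real.exp (K * lam) - 1) * M ν := by ring
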